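/- With the above setup, for all c, x, y ∈ C one has x ⊗ (c·y) − (s(c)·x) ⊗ y ∈ N. In other words, in the quotient of C ⊗_A C by N, multiplication by c on the right tensor factor coincides with multiplication by s(c) on the left tensor factor. -/

import Mathlib

open TensorProduct

/-- The subring of fixed points of a ring endomorphism `s`. -/
def fixedSubring {C : Type*} [CommRing C] (s : C →+* C) : Subring C :=
  RingHom.eqLocus s (RingHom.id C)

/-- The map `a_s : C → C ⊗_{C^s} C`, `c ↦ X ⊗ c + 1 ⊗ X·c`. -/
noncomputable def aMap {C : Type*} [CommRing C] (s : C →+* C) (X : C) (c : C) :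
    C ⊗[fixedSubring s] C :=
  X ⊗ₜ c + 1 ⊗ₜ (X * c)

lemma tmul_coe_mul {C : Type*} [CommRing C] (s : C →+* C) (a : fixedSubring s) (x z : C) :
    (x ⊗ₜ ((a : C) * z) : C ⊗[fixedSubring s] C) = ((a : C) * x) ⊗ₜ z := by
  have h1 : (a : C) * z = a • z := rfl
  have h2 : (a : C) * x = a • x := rfl
  rw [h1, h2, TensorProduct.tmul_smul, TensorProduct.smul_tmul']

/-- in `C ⊗_A C` modulo the `C`-submodule `N` generated by the image of `a_s`
(`C` acting on the left tensor factor), multiplication by `c` on the right factor agrees with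
multiplication by `s c` on the left factor. -/
theorem stmt1 {C : Type*} [CommRing C] (s : C →+* C) (hs : ∀ c, s (s c) = c)
    (X : C) (hX : s X = -X)
    (b : Module.Basis (Fin 2) (fixedSubring s) C) (hb0 : b 0 = 1) (hb1 : b 1 = X) :
    ∀ c x y : C,
      (x ⊗ₜ (c * y) - (s c * x) ⊗ₜ y : C ⊗[fixedSubring s] C) ∈
        Submodule.span C (Set.range (aMap s X)) := by
  intro c x y
  set a0 : fixedSubring s := b.repr c 0 with ha0
  set a1 : fixedSubring s := b.repr c 1 with ha1
  have hc : c = (a0 : C) + (a1 : C) * X := by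
    have h := b.sum_repr c
    rw [Fin.sum_univ_two, hb0, hb1] at h
    rw [← h]
    simp [Subring.smul_def, mul_comm]
    rfl
  have hsa0 : s (a0 : C) = (a0 : C) := a0.2
  have hsa1 : s (a1 : C) = (a1 : C) := a1.2
  have hsc : s c = (a0 : C) - (a1 : C) * X := by
    rw [hc, map_add, map_mul, hX, hsa0, hsa1]
    ring
  have key : (x ⊗ₜ (c * y) - (s c * x) ⊗ₜ y : C ⊗[fixedSubring s] C)
      = ((a1 : C) * x) • aMap s X y := by
    rw [hsc, hc, aMap]
    rw [add_mul, sub_mul, TensorProduct.tmul_add, TensorProduct.sub_tmul,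
      smul_add, TensorProduct.smul_tmul', TensorProduct.smul_tmul']
    have e1 : (x ⊗ₜ ((a0 : C) * y) : C ⊗[fixedSubring s] C) = ((a0 : C) * x) ⊗ₜ y :=
      tmul_coe_mul s a0 x y
    have e2 : (x ⊗ₜ ((a1 : C) * X * y) : C ⊗[fixedSubring s] C)
        = ((a1 : C) * x) ⊗ₜ (X * y) := by
      rw [mul_assoc]; exact tmul_coe_mul s a1 x (X * y)
    rw [e1, e2]
    simp only [smul_eq_mul, mul_one]
    abel_nf
    ring_nf
  rw [key]
  exact Submodule.smul_mem _ _ (Submodule.subset_span ⟨y, rfl⟩)
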